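/- If Φ is trace-preserving, unital, and J(Φ) is Hermitian with ‖J(Φ) − (1/d)1‖_∞ ≤ 1/(d(d²−1)), then Ψ = (d²−1)Φ − (d²−2)Ω is doubly stochastic, i.e. completely positive, trace-preserving, and unital. -/

import Mathlib

open Matrix MeasureTheory
open scoped Kronecker ComplexOrder

/-- vec(A): vec(|i⟩⟨j|) = |i⟩ ⊗ |j⟩. -/
def vec {d : ℕ} (A : Matrix (Fin d) (Fin d) ℂ) : Fin d × Fin d → ℂ := fun p => A p.1 p.2

/-- The rank-one operator vec(A) vec(A)*. -/
noncomputable def outer {d : ℕ} (A : Matrix (Fin d) (Fin d) ℂ) :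
    Matrix (Fin d × Fin d) (Fin d × Fin d) ℂ :=
  vecMulVec (_root_.vec A) (star (_root_.vec A))

/-- Choi–Jamiołkowski representation J(Φ) = Σ_{i,j} Φ(|i⟩⟨j|) ⊗ |i⟩⟨j|. -/
noncomputable def choi {d : ℕ} (Φ : Matrix (Fin d) (Fin d) ℂ → Matrix (Fin d) (Fin d) ℂ) :
    Matrix (Fin d × Fin d) (Fin d × Fin d) ℂ :=
  ∑ i, ∑ j, (Φ (single i j 1)) ⊗ₖ (single i j 1)

/-- Partial trace over the first (Y) tensor factor. -/
noncomputable def ptraceLeft {d : ℕ} (M : Matrix (Fin d × Fin d) (Fin d × Fin d) ℂ) :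
    Matrix (Fin d) (Fin d) ℂ :=
  Matrix.of fun i j => ∑ k, M (k, i) (k, j)

/-- Partial trace over the second (X) tensor factor. -/
noncomputable def ptraceRight {d : ℕ} (M : Matrix (Fin d × Fin d) (Fin d × Fin d) ℂ) :
    Matrix (Fin d) (Fin d) ℂ :=
  Matrix.of fun i j => ∑ k, M (i, k) (j, k)

/-- The swap operator W on Y ⊗ X. -/
def swapOp (d : ℕ) : Matrix (Fin d × Fin d) (Fin d × Fin d) ℂ :=
  Matrix.of fun p q => if p.1 = q.2 ∧ p.2 = q.1 then 1 else 0

/-- Antisymmetric projection R = (1 - W)/2. -/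
noncomputable def projR (d : ℕ) : Matrix (Fin d × Fin d) (Fin d × Fin d) ℂ :=
  (2 : ℂ)⁻¹ • (1 - swapOp d)

/-- Symmetric projection S = (1 + W)/2. -/
noncomputable def projS (d : ℕ) : Matrix (Fin d × Fin d) (Fin d × Fin d) ℂ :=
  (2 : ℂ)⁻¹ • (1 + swapOp d)

/-- Hilbert–Schmidt inner product ⟨A,B⟩ = Tr(A* B). -/
noncomputable def hsInner {n : Type*} [Fintype n] (A B : Matrix n n ℂ) : ℂ := (Aᴴ * B).trace

/-- Mixed-unitary channel: a finite convex combination of unitary conjugations. -/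
def IsMixedUnitary {d : ℕ} (Φ : Matrix (Fin d) (Fin d) ℂ → Matrix (Fin d) (Fin d) ℂ) : Prop :=
  ∃ (N : ℕ) (p : Fin N → ℝ) (U : Fin N → Matrix.unitaryGroup (Fin d) ℂ),
    (∀ i, 0 ≤ p i) ∧ (∑ i, p i) = 1 ∧
    ∀ X, Φ X = ∑ i, (p i : ℂ) •
      ((U i : Matrix (Fin d) (Fin d) ℂ) * X * star (U i : Matrix (Fin d) (Fin d) ℂ))

/-- Complete positivity: every extension 1_n ⊗ Φ maps PSD matrices to PSD matrices. -/
def IsCompletelyPositive {d : ℕ}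
    (Φ : Matrix (Fin d) (Fin d) ℂ → Matrix (Fin d) (Fin d) ℂ) : Prop :=
  ∀ (n : ℕ) (M : Matrix (Fin n × Fin d) (Fin n × Fin d) ℂ), M.PosSemidef →
    (Matrix.of fun p q : Fin n × Fin d =>
      Φ (Matrix.of fun i j => M (p.1, i) (q.1, j)) p.2 q.2).PosSemidef

/-- The completely depolarizing channel Ω(X) = (Tr X / d) 1. -/
noncomputable def depol {d : ℕ} (X : Matrix (Fin d) (Fin d) ℂ) : Matrix (Fin d) (Fin d) ℂ :=
  (X.trace / (d : ℂ)) • 1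


open scoped Matrix.Norms.L2Operator

section Aux

lemma quad_swap {α β ι κ : Type*} [Fintype α] [Fintype β] [Fintype ι] [Fintype κ]
    (u : ι → α → ℂ) (v : ι → β → ℂ) (w : κ → α → ℂ) (x : κ → β → ℂ) :
    (∑ k, ∑ l, (∑ r, u r k * v r l) * (∑ m, w m k * x m l)) =
    ∑ m, ∑ r, (∑ k, u r k * w m k) * (∑ l, v r l * x m l) := by
  simp_rw [Finset.sum_mul_sum]
  calc (∑ k, ∑ l, ∑ r, ∑ m, (u r k * v r l) * (w m k * x m l))
      = ∑ k, ∑ l, ∑ m, ∑ r, (u r k * v r l) * (w m k * x m l) :=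
        Finset.sum_congr rfl fun k _ => Finset.sum_congr rfl fun l _ => Finset.sum_comm
    _ = ∑ k, ∑ m, ∑ l, ∑ r, (u r k * v r l) * (w m k * x m l) :=
        Finset.sum_congr rfl fun k _ => Finset.sum_comm
    _ = ∑ m, ∑ k, ∑ l, ∑ r, (u r k * v r l) * (w m k * x m l) := Finset.sum_comm
    _ = ∑ m, ∑ k, ∑ r, ∑ l, (u r k * v r l) * (w m k * x m l) :=
        Finset.sum_congr rfl fun m _ => Finset.sum_congr rfl fun k _ => Finset.sum_comm
    _ = ∑ m, ∑ r, ∑ k, ∑ l, (u r k * v r l) * (w m k * x m l) :=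
        Finset.sum_congr rfl fun m _ => Finset.sum_comm
    _ = ∑ m, ∑ r, ∑ k, ∑ l, (u r k * w m k) * (v r l * x m l) :=
        Finset.sum_congr rfl fun m _ => Finset.sum_congr rfl fun r _ =>
          Finset.sum_congr rfl fun k _ => Finset.sum_congr rfl fun l _ => by ring

lemma choi_entry {d : ℕ} (f : Matrix (Fin d) (Fin d) ℂ → Matrix (Fin d) (Fin d) ℂ)
    (i k j l : Fin d) : choi f (i, k) (j, l) = f (single k l 1) i j := by
  simp [choi, Matrix.sum_apply, kroneckerMap_apply, single, Matrix.of_apply,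
    Finset.sum_ite_eq, mul_ite, mul_one, mul_zero]
  rw [Finset.sum_eq_single k, Finset.sum_eq_single l] <;> simp +contextual

lemma expand_entry {d : ℕ} (Ψ : Matrix (Fin d) (Fin d) ℂ →ₗ[ℂ] Matrix (Fin d) (Fin d) ℂ)
    (X : Matrix (Fin d) (Fin d) ℂ) (i j : Fin d) :
    Ψ X i j = ∑ k, ∑ l, X k l * choi ⇑Ψ (i, k) (j, l) := by
  conv_lhs => rw [matrix_eq_sum_single X]
  simp_rw [choi_entry]
  rw [map_sum]
  simp_rw [map_sum, Matrix.sum_apply]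
  congr 1; ext k; congr 1; ext l
  rw [show single k l (X k l) = X k l • single k l 1 by
    ext a b; simp [single, Matrix.smul_apply, mul_ite]]
  rw [LinearMap.map_smul]; simp

lemma cp_of_choi_psd {d : ℕ} (Ψ : Matrix (Fin d) (Fin d) ℂ →ₗ[ℂ] Matrix (Fin d) (Fin d) ℂ)
    (h : (choi ⇑Ψ).PosSemidef) : IsCompletelyPositive ⇑Ψ := by
  intro n M hM
  obtain ⟨B, hB⟩ : ∃ B : Matrix (Fin d × Fin d) (Fin d × Fin d) ℂ, choi ⇑Ψ = Bᴴ * B := by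
    open scoped MatrixOrder in
    obtain ⟨B, hB⟩ := CStarAlgebra.nonneg_iff_eq_star_mul_self.mp h.nonneg
    exact ⟨B, hB⟩
  obtain ⟨A, hA⟩ : ∃ A : Matrix (Fin n × Fin d) (Fin n × Fin d) ℂ, M = Aᴴ * A := by
    open scoped MatrixOrder in
    obtain ⟨A, hA⟩ := CStarAlgebra.nonneg_iff_eq_star_mul_self.mp hM.nonneg
    exact ⟨A, hA⟩
  set G : Matrix ((Fin d × Fin d) × (Fin n × Fin d)) (Fin n × Fin d) ℂ :=
    Matrix.of (fun mr q => ∑ k, A mr.2 (q.1, k) * B mr.1 (q.2, k)) with hG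
  have hBe : ∀ i k j l, choi ⇑Ψ (i,k) (j,l) = ∑ m, star (B m (i,k)) * B m (j,l) := by
    intro i k j l; rw [hB, Matrix.mul_apply]; simp [Matrix.conjTranspose_apply]
  have hAe : ∀ a k b l, M (a,k) (b,l) = ∑ r, star (A r (a,k)) * A r (b,l) := by
    intro a k b l; rw [hA, Matrix.mul_apply]; simp [Matrix.conjTranspose_apply]
  have key : (Matrix.of fun p q : Fin n × Fin d =>
      Ψ (Matrix.of fun i j => M (p.1, i) (q.1, j)) p.2 q.2) = Gᴴ * G := by
    ext p q
    rw [Matrix.of_apply, expand_entry, Matrix.mul_apply]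
    simp_rw [Matrix.of_apply, hAe, hBe]
    have hq : (∑ mr : (Fin d × Fin d) × (Fin n × Fin d), Gᴴ p mr * G mr q) =
        ∑ m, ∑ r, (∑ k, star (A r (p.1, k)) * star (B m (p.2, k))) *
          (∑ l, A r (q.1, l) * B m (q.2, l)) := by
      rw [Fintype.sum_prod_type]
      refine Finset.sum_congr rfl fun m _ => Finset.sum_congr rfl fun r _ => ?_
      rw [conjTranspose_apply, hG]
      simp only [Matrix.of_apply, star_sum, star_mul']
    rw [hq]
    exact quad_swap (fun r k => star (A r (p.1, k))) (fun r l => A r (q.1, l))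
        (fun m k => star (B m (p.2, k))) (fun m l => B m (q.2, l))
  rw [key]
  exact posSemidef_conjTranspose_mul_self G

lemma herm_real {n : Type*} [Fintype n] [DecidableEq n] (A : Matrix n n ℂ) (hA : A.IsHermitian)
    (x : n → ℂ) : star (dotProduct (star x) (A *ᵥ x)) = dotProduct (star x) (A *ᵥ x) := by
  nth_rewrite 2 [← hA.eq]
  rw [star_dotProduct, star_star, star_mulVec, dotProduct_mulVec, dotProduct_comm]

lemma psd_shift {n : Type*} [Fintype n] [DecidableEq n] (A : Matrix n n ℂ) (hA : A.IsHermitian)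
    (c e : ℝ) (hc : 0 ≤ c) (hce : c * ‖A‖ ≤ e) :
    ((c : ℂ) • A + (e : ℂ) • 1).PosSemidef := by
  apply PosSemidef.of_dotProduct_mulVec_nonneg
  · simp only [IsHermitian, conjTranspose_add, conjTranspose_smul, conjTranspose_one, hA.eq,
      Complex.star_def, Complex.conj_ofReal]
  · intro x
    have h1 : star x ⬝ᵥ (((c : ℂ) • A + (e : ℂ) • 1) *ᵥ x)
        = (c : ℂ) * (star x ⬝ᵥ A *ᵥ x) + (e : ℂ) * (star x ⬝ᵥ x) := by
      rw [add_mulVec, smul_mulVec, smul_mulVec, one_mulVec, dotProduct_add,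
        dotProduct_smul, dotProduct_smul, smul_eq_mul, smul_eq_mul]
    set x' : EuclideanSpace ℂ n := (WithLp.equiv 2 _).symm x with hx'
    set t : ℂ := star x ⬝ᵥ A *ᵥ x with hts
    have ht : t = (t.re : ℂ) := (Complex.conj_eq_iff_re.mp (herm_real A hA x)).symm
    have hxx : star x ⬝ᵥ x = ((‖x'‖ ^ 2 : ℝ) : ℂ) := by
      rw [show star x ⬝ᵥ x = @inner ℂ _ _ x' x' by rw [dotProduct_comm]; rfl, inner_self_eq_norm_sq_to_K]
      norm_num
    have htb : |t.re| ≤ ‖A‖ * ‖x'‖ ^ 2 := by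
      have h2 : t = @inner ℂ _ _ x' ((WithLp.equiv 2 _).symm (A *ᵥ x)) := by
        rw [hts, dotProduct_comm]; rfl
      have h3 := norm_inner_le_norm (𝕜 := ℂ) x' ((WithLp.equiv 2 (n → ℂ)).symm (A *ᵥ x))
      have h4 := A.l2_opNorm_mulVec x'
      have h5 : ‖t‖ ≤ ‖x'‖ * (‖A‖ * ‖x'‖) := by
        rw [h2]
        exact h3.trans (by
          have heq : (WithLp.equiv 2 (n → ℂ)).symm (A *ᵥ x)
              = (EuclideanSpace.equiv n ℂ).symm (A *ᵥ x') := rfl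
          rw [heq]
          exact mul_le_mul_of_nonneg_left h4 (norm_nonneg _))
      have h6 : |t.re| ≤ ‖t‖ := Complex.abs_re_le_norm t
      nlinarith [norm_nonneg x', norm_nonneg t]
    rw [h1, hxx, ht]
    have hcast : (c : ℂ) * (t.re : ℂ) + (e : ℂ) * ((‖x'‖ ^ 2 : ℝ) : ℂ)
        = ((c * t.re + e * ‖x'‖ ^ 2 : ℝ) : ℂ) := by push_cast; ring
    rw [hcast, Complex.zero_le_real]
    nlinarith [sq_nonneg ‖x'‖, abs_le.mp htb, norm_nonneg A]

/-- `depol` as a linear map. -/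
noncomputable def depolLin (d : ℕ) : Matrix (Fin d) (Fin d) ℂ →ₗ[ℂ] Matrix (Fin d) (Fin d) ℂ where
  toFun := depol
  map_add' X Y := by simp [depol, Matrix.trace_add, add_div, add_smul]
  map_smul' c X := by
    simp only [depol, Matrix.trace_smul, smul_eq_mul, RingHom.id_apply, smul_smul]
    rw [mul_div_assoc]

lemma trace_std {d : ℕ} (k l : Fin d) :
    (single k l (1 : ℂ)).trace = if k = l then 1 else 0 := by
  by_cases h : k = l
  · subst h; simp [Matrix.trace, Matrix.diag, single]
  · simp only [Matrix.trace, Matrix.diag, single, Matrix.of_apply]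
    rw [if_neg h, Finset.sum_eq_zero]
    intro a _
    rw [if_neg]
    rintro ⟨rfl, rfl⟩
    exact h rfl

end Aux


theorem stmt18 (d : ℕ) (hd : 0 < d) (Φ : Matrix (Fin d) (Fin d) ℂ →ₗ[ℂ] Matrix (Fin d) (Fin d) ℂ)
    (hTP : ∀ X, (Φ X).trace = X.trace) (hU : Φ 1 = 1)
    (hH : (choi ⇑Φ).IsHermitian)
    (hnorm : ‖choi ⇑Φ - (d : ℂ)⁻¹ • (1 : Matrix (Fin d × Fin d) (Fin d × Fin d) ℂ)‖ ≤ 1 / ((d : ℝ) * ((d : ℝ) ^ 2 - 1))) :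
    IsCompletelyPositive
        (fun X : Matrix (Fin d) (Fin d) ℂ => ((d : ℂ) ^ 2 - 1) • Φ X - ((d : ℂ) ^ 2 - 2) • depol X) ∧
    (∀ X : Matrix (Fin d) (Fin d) ℂ,
        (((d : ℂ) ^ 2 - 1) • Φ X - ((d : ℂ) ^ 2 - 2) • depol X).trace = X.trace) ∧
    ((d : ℂ) ^ 2 - 1) • Φ (1 : Matrix (Fin d) (Fin d) ℂ) - ((d : ℂ) ^ 2 - 2) • depol (1 : Matrix (Fin d) (Fin d) ℂ) = 1 := by
  have hd0 : ((d : ℂ)) ≠ 0 := Nat.cast_ne_zero.mpr hd.ne'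
  have hdepol1 : depol (1 : Matrix (Fin d) (Fin d) ℂ) = 1 := by
    simp [depol, Matrix.trace_one, div_self hd0]
  have hTr : ∀ X : Matrix (Fin d) (Fin d) ℂ, (depol X).trace = X.trace := by
    intro X
    simp [depol, Matrix.trace_smul, Matrix.trace_one, smul_eq_mul, div_mul_eq_mul_div,
      mul_div_assoc, mul_div_cancel_left₀, div_mul_cancel₀ _ hd0]
  refine ⟨?_, ?_, ?_⟩
  · -- complete positivity
    set Ψl : Matrix (Fin d) (Fin d) ℂ →ₗ[ℂ] Matrix (Fin d) (Fin d) ℂ :=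
      ((d : ℂ) ^ 2 - 1) • Φ - ((d : ℂ) ^ 2 - 2) • depolLin d with hΨl
    have hfun : (fun X : Matrix (Fin d) (Fin d) ℂ =>
        ((d : ℂ) ^ 2 - 1) • Φ X - ((d : ℂ) ^ 2 - 2) • depol X) = ⇑Ψl := rfl
    rw [hfun]
    apply cp_of_choi_psd
    have hAh : (choi ⇑Φ - (d : ℂ)⁻¹ • 1).IsHermitian := by
      simp only [IsHermitian, conjTranspose_sub, conjTranspose_smul, conjTranspose_one, hH.eq]
      congr 1
      simp
    have hchoi : choi ⇑Ψl = ((((d : ℝ) ^ 2 - 1 : ℝ)) : ℂ) • (choi ⇑Φ - (d : ℂ)⁻¹ • 1)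
        + (((d : ℝ)⁻¹ : ℝ) : ℂ) • 1 := by
      ext ⟨i, k⟩ ⟨j, l⟩
      rw [choi_entry]
      show Ψl (single k l 1) i j = _
      rw [hΨl]
      simp only [LinearMap.sub_apply, LinearMap.smul_apply, Matrix.sub_apply, Matrix.smul_apply,
        Matrix.add_apply, Matrix.one_apply, smul_eq_mul, (show ∀ X, depolLin d X = depol X from fun _ => rfl), LinearMap.coe_mk,
        AddHom.coe_mk, depol, trace_std, ← choi_entry (⇑Φ) i k j l]
      push_cast
      by_cases hij : i = j <;> by_cases hkl : k = l <;>
        simp [hij, hkl, Prod.ext_iff] <;> field_simp <;> ring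
    rw [hchoi]
    have hdr : (1 : ℝ) ≤ (d : ℝ) := by exact_mod_cast hd
    apply psd_shift _ hAh
    · nlinarith
    · -- ((d:ℝ)^2 - 1) * ‖choi Φ - d⁻¹ • 1‖ ≤ (d:ℝ)⁻¹
      rcases eq_or_lt_of_le hdr with h1 | h1
      · rw [← h1]; norm_num
      · have hq : (0 : ℝ) < (d : ℝ) ^ 2 - 1 := by nlinarith
        have hdp : (0 : ℝ) < (d : ℝ) := by linarith
        have h3 : ((d : ℝ) ^ 2 - 1) * (1 / ((d : ℝ) * ((d : ℝ) ^ 2 - 1))) = (d : ℝ)⁻¹ := by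
          field_simp
        nlinarith [mul_le_mul_of_nonneg_left hnorm hq.le]
  · -- trace preserving
    intro X
    rw [Matrix.trace_sub, Matrix.trace_smul, Matrix.trace_smul, hTP, hTr, smul_eq_mul,
      smul_eq_mul]
    ring
  · -- unital
    rw [hU, hdepol1, ← sub_smul]
    norm_num
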